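/- Let t ↦ (x₁(t), x₂(t), p₁(t), p₂(t)) be a solution of the Hamiltonian system with the underwater-ridge Hamiltonian on which p₂(t) ≡ γ and ℋ² ≡ E for constants γ and E with E > γ² ≥ 0, and set 𝔥 = E/(E − γ²). Then for every t the variable x₁ satisfies the autonomous equation (x₁(t)·ẋ₁(t))²·(x₁(t)² + a)² = (1/𝔥)·x₁(t)²·(x₁(t)² + b)·(x₁(t)² + a + (𝔥 − 1)(a − b)). -/

import Mathlib

open Real

/-- The underwater-ridge Hamiltonian
`ℋ(x₁, x₂, p₁, p₂) = √(p₁² + p₂²) · √((x₁² + b)/(x₁² + a))`. -/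
noncomputable def ridgeH (a b x₁ x₂ p₁ p₂ : ℝ) : ℝ :=
  Real.sqrt (p₁ ^ 2 + p₂ ^ 2) * Real.sqrt ((x₁ ^ 2 + b) / (x₁ ^ 2 + a))

/-- On a solution of the underwater-ridge Hamiltonian
system with `p₂ ≡ γ` and `ℋ² ≡ E` (`E > γ² ≥ 0`, `𝔥 = E/(E − γ²)`), the
variable `x₁` satisfies the autonomous equation
`(x₁·ẋ₁)²·(x₁² + a)² = (1/𝔥)·x₁²·(x₁² + b)·(x₁² + a + (𝔥 − 1)(a − b))`. -/
theorem ridge_x1_autonomous_equation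
    (a b : ℝ) (hb : 0 < b) (hab : b < a)
    (γ E : ℝ) (hγE : γ ^ 2 < E)
    (x₁ x₂ p₁ p₂ : ℝ → ℝ)
    (hne : ∀ t, (p₁ t, p₂ t) ≠ (0, 0))
    (hx₁ : ∀ t, HasDerivAt x₁ (deriv (fun q => ridgeH a b (x₁ t) (x₂ t) q (p₂ t)) (p₁ t)) t)
    (hx₂ : ∀ t, HasDerivAt x₂ (deriv (fun q => ridgeH a b (x₁ t) (x₂ t) (p₁ t) q) (p₂ t)) t)
    (hp₁ : ∀ t, HasDerivAt p₁ (-(deriv (fun y => ridgeH a b y (x₂ t) (p₁ t) (p₂ t)) (x₁ t))) t)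
    (hp₂ : ∀ t, HasDerivAt p₂ (-(deriv (fun y => ridgeH a b (x₁ t) y (p₁ t) (p₂ t)) (x₂ t))) t)
    (hp₂const : ∀ t, p₂ t = γ)
    (hHconst : ∀ t, (ridgeH a b (x₁ t) (x₂ t) (p₁ t) (p₂ t)) ^ 2 = E)
    (𝔥 : ℝ) (h𝔥 : 𝔥 = E / (E - γ ^ 2)) :
    ∀ t : ℝ,
      (x₁ t * deriv x₁ t) ^ 2 * (x₁ t ^ 2 + a) ^ 2
        = (1 / 𝔥) * x₁ t ^ 2 * (x₁ t ^ 2 + b) * (x₁ t ^ 2 + a + (𝔥 - 1) * (a - b)) := by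
  intro t
  set X := x₁ t with hX
  set P := p₁ t with hP
  have hxb : (0:ℝ) < X ^ 2 + b := by positivity
  have hxa : (0:ℝ) < X ^ 2 + a := by nlinarith [sq_nonneg X]
  have hr : (0:ℝ) < (X ^ 2 + b) / (X ^ 2 + a) := div_pos hxb hxa
  have hne' : (P, γ) ≠ ((0:ℝ), (0:ℝ)) := by
    have := hne t; rwa [hp₂const t] at this
  have hs : 0 < P ^ 2 + γ ^ 2 := by
    rcases eq_or_ne P 0 with h | h
    · have hγ : γ ≠ 0 := fun hγ => hne' (by simp [h, hγ])
      positivity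
    · positivity
  have hE : (P ^ 2 + γ ^ 2) * ((X ^ 2 + b) / (X ^ 2 + a)) = E := by
    have h := hHconst t
    rw [hp₂const t, ridgeH, mul_pow, Real.sq_sqrt (by positivity),
      Real.sq_sqrt hr.le] at h
    exact h
  have hE2 : (P ^ 2 + γ ^ 2) * (X ^ 2 + b) = E * (X ^ 2 + a) := by
    field_simp at hE
    linarith [hE]
  have hEγ : 0 < E - γ ^ 2 := by linarith
  have hEpos : 0 < E := by nlinarith [sq_nonneg γ]
  have h𝔥pos : 0 < 𝔥 := by rw [h𝔥]; positivity
  -- compute the derivative of the Hamiltonian in p₁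
  have hd : deriv (fun q => ridgeH a b X (x₂ t) q γ) P
      = P / Real.sqrt (P ^ 2 + γ ^ 2) * Real.sqrt ((X ^ 2 + b) / (X ^ 2 + a)) := by
    have h1 : HasDerivAt (fun q : ℝ => q ^ 2 + γ ^ 2) (2 * P) P := by
      simpa using (hasDerivAt_pow 2 P).add_const (γ ^ 2)
    have h2 : HasDerivAt (fun q : ℝ => Real.sqrt (q ^ 2 + γ ^ 2))
        (1 / (2 * Real.sqrt (P ^ 2 + γ ^ 2)) * (2 * P)) P :=
      (Real.hasDerivAt_sqrt hs.ne').comp P h1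
    have h3 : HasDerivAt (fun q : ℝ => ridgeH a b X (x₂ t) q γ)
        (1 / (2 * Real.sqrt (P ^ 2 + γ ^ 2)) * (2 * P) * Real.sqrt ((X ^ 2 + b) / (X ^ 2 + a))) P := by
      simpa [ridgeH] using h2.mul_const (Real.sqrt ((X ^ 2 + b) / (X ^ 2 + a)))
    rw [h3.deriv]
    have hsq : Real.sqrt (P ^ 2 + γ ^ 2) ≠ 0 := by positivity
    field_simp
  have hdx : deriv x₁ t
      = P / Real.sqrt (P ^ 2 + γ ^ 2) * Real.sqrt ((X ^ 2 + b) / (X ^ 2 + a)) := by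
    have h := (hx₁ t).deriv
    rw [h]
    rw [show (fun q => ridgeH a b (x₁ t) (x₂ t) q (p₂ t)) = fun q => ridgeH a b X (x₂ t) q γ by
      funext q; rw [hp₂const t, hX]]
    exact hd
  rw [hdx]
  have hsqs : Real.sqrt (P ^ 2 + γ ^ 2) ^ 2 = P ^ 2 + γ ^ 2 := Real.sq_sqrt hs.le
  have hsqr : Real.sqrt ((X ^ 2 + b) / (X ^ 2 + a)) ^ 2 = (X ^ 2 + b) / (X ^ 2 + a) :=
    Real.sq_sqrt hr.le
  have hLHS : (X * (P / Real.sqrt (P ^ 2 + γ ^ 2) * Real.sqrt ((X ^ 2 + b) / (X ^ 2 + a)))) ^ 2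
        * (X ^ 2 + a) ^ 2
      = X ^ 2 * P ^ 2 / (P ^ 2 + γ ^ 2) * ((X ^ 2 + b) * (X ^ 2 + a)) := by
    rw [mul_pow, mul_pow, div_pow, hsqs, hsqr]
    field_simp
  rw [hLHS, h𝔥]
  have hP2 : P ^ 2 = (E * (X ^ 2 + a) - γ ^ 2 * (X ^ 2 + b)) / (X ^ 2 + b) := by
    field_simp
    linarith [hE2]
  have hden : P ^ 2 + γ ^ 2 = E * (X ^ 2 + a) / (X ^ 2 + b) := by
    rw [hP2]; field_simp; ring
  rw [hden, hP2]
  field_simp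
  ring
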